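/- Let K ≥ 1, σ² > 0, C_k > 0 and A_k ≥ 0 for 1 ≤ k ≤ K, set D_k := A_k/(1 + A_k), and fix θ ∈ ℝ and 1 ≤ K₀ ≤ K−1. Define â_1, …, â_{K₀} by the forward recursion â_k = D_k·(θ − Σ_{i=1}^{k−1} â_i) + D_k·σ²/C_k. Then for any a ∈ ℝ^K satisfying Σ_{k=1}^K a_k = θ and a_k ≥ A_k·(Σ_{i=k+1}^K a_i + σ²/C_k) for all 1 ≤ k ≤ K, one has Σ_{i=1}^{k} a_i ≥ Σ_{i=1}^{k} â_i for every 1 ≤ k ≤ K₀; in particular x_{K₀} := Σ_{i=K₀+1}^K a_i satisfies x_{K₀} ≤ θ − Σ_{k=1}^{K₀} â_k, i.e., the maximum of x_{K₀} over the constraint set is θ − Σ_{k=1}^{K₀} â_k, attained exactly when the first K₀ constraints hold with equality. -/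

import Mathlib

/-- Proposition 1 of the paper: with `â_k` defined by the forward recursion
`â_k = D_k (θ − ∑_{i<k} â_i) + D_k σ²/C_k`, `D_k = A_k/(1+A_k)`, every feasible power
allocation `a` (total `θ`, QoS constraints `a_k ≥ A_k (∑_{i>k} a_i + σ²/C_k)`) has partial sums
dominating those of `â`; hence `x_{K₀} = ∑_{i=K₀+1}^K a_i ≤ θ − ∑_{k=1}^{K₀} â_k`, with equality
exactly when the first `K₀` constraints are active. -/
theorem stmt_5 (K K0 : ℕ) (hK : 1 ≤ K) (hK0 : 1 ≤ K0) (hK0K : K0 ≤ K - 1)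
    (σ2 : ℝ) (hσ : 0 < σ2) (C A : ℕ → ℝ)
    (hC : ∀ k ∈ Finset.Icc 1 K, 0 < C k)
    (hA : ∀ k ∈ Finset.Icc 1 K, 0 ≤ A k)
    (D : ℕ → ℝ) (hD : ∀ k, D k = A k / (1 + A k))
    (θ : ℝ) (ahat : ℕ → ℝ)
    (hahat : ∀ k ∈ Finset.Icc 1 K0,
      ahat k = D k * (θ - ∑ i ∈ Finset.Ico 1 k, ahat i) + D k * σ2 / C k) :
    ∀ a : ℕ → ℝ,
      (∑ k ∈ Finset.Icc 1 K, a k) = θ →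
      (∀ k ∈ Finset.Icc 1 K,
        A k * ((∑ i ∈ Finset.Ioc k K, a i) + σ2 / C k) ≤ a k) →
      (∀ k ∈ Finset.Icc 1 K0,
        (∑ i ∈ Finset.Icc 1 k, ahat i) ≤ ∑ i ∈ Finset.Icc 1 k, a i) ∧
      ((∑ i ∈ Finset.Ioc K0 K, a i) ≤ θ - ∑ k ∈ Finset.Icc 1 K0, ahat k) ∧
      ((∑ i ∈ Finset.Ioc K0 K, a i) = θ - (∑ k ∈ Finset.Icc 1 K0, ahat k) ↔
        ∀ k ∈ Finset.Icc 1 K0,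
          a k = A k * ((∑ i ∈ Finset.Ioc k K, a i) + σ2 / C k)) := by
  intro a hsum hcon
  have hK0K' : K0 ≤ K := le_trans hK0K (Nat.sub_le K 1)
  -- tail sum identity
  have tail : ∀ k, k ≤ K → ∑ i ∈ Finset.Ioc k K, a i = θ - ∑ i ∈ Finset.Icc 1 k, a i := by
    intro k hk
    have h1 : Finset.Icc 1 k = Finset.Ioc 0 k := by rw [← Finset.Icc_add_one_left_eq_Ioc]; rfl
    have h2 : Finset.Icc 1 K = Finset.Ioc 0 K := by rw [← Finset.Icc_add_one_left_eq_Ioc]; rfl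
    have h3 : (∑ i ∈ Finset.Ioc 0 k, a i) + ∑ i ∈ Finset.Ioc k K, a i
        = ∑ i ∈ Finset.Ioc 0 K, a i := Finset.sum_Ioc_consecutive _ (Nat.zero_le k) hk
    rw [h1]
    rw [h2] at hsum
    linarith
  -- step lemma for partial sums
  have step : ∀ (f : ℕ → ℝ) (n : ℕ),
      ∑ i ∈ Finset.Icc 1 (n + 1), f i = (∑ i ∈ Finset.Icc 1 n, f i) + f (n + 1) := by
    intro f n
    exact Finset.sum_Icc_succ_top (Nat.succ_le_succ (Nat.zero_le n)) f
  -- the hat recursion in terms of partial sums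
  have hhat' : ∀ n, n + 1 ≤ K0 →
      (1 + A (n + 1)) * (∑ i ∈ Finset.Icc 1 (n + 1), ahat i)
        = (∑ i ∈ Finset.Icc 1 n, ahat i) + A (n + 1) * θ + A (n + 1) * (σ2 / C (n + 1)) := by
    intro n hn
    have hmem : n + 1 ∈ Finset.Icc 1 K0 := Finset.mem_Icc.mpr ⟨Nat.succ_le_succ (Nat.zero_le n), hn⟩
    have hmemK : n + 1 ∈ Finset.Icc 1 K := Finset.mem_Icc.mpr
      ⟨Nat.succ_le_succ (Nat.zero_le n), le_trans hn hK0K'⟩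
    have hApos : 0 ≤ A (n + 1) := hA _ hmemK
    have hCpos : 0 < C (n + 1) := hC _ hmemK
    have h1A : (0:ℝ) < 1 + A (n + 1) := by linarith
    have hIco : Finset.Ico 1 (n + 1) = Finset.Icc 1 n := Finset.Ico_add_one_right_eq_Icc 1 n
    have hrec := hahat _ hmem
    rw [hIco] at hrec
    have hDmul : D (n + 1) * (1 + A (n + 1)) = A (n + 1) := by
      rw [hD]; field_simp
    rw [step ahat n, hrec]
    linear_combination (θ - (∑ i ∈ Finset.Icc 1 n, ahat i) + σ2 / C (n + 1)) * hDmul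
  -- the feasibility inequality in terms of partial sums
  have hfeas : ∀ n, n + 1 ≤ K0 →
      (∑ i ∈ Finset.Icc 1 n, a i) + A (n + 1) * θ + A (n + 1) * (σ2 / C (n + 1))
        ≤ (1 + A (n + 1)) * (∑ i ∈ Finset.Icc 1 (n + 1), a i) := by
    intro n hn
    have hmemK : n + 1 ∈ Finset.Icc 1 K := Finset.mem_Icc.mpr
      ⟨Nat.succ_le_succ (Nat.zero_le n), le_trans hn hK0K'⟩
    have hcon' := hcon _ hmemK
    rw [tail (n + 1) (le_trans hn hK0K'), step a n] at hcon'
    rw [step a n]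
    nlinarith [hcon']
  -- main induction
  have main : ∀ k, k ≤ K0 →
      (∑ i ∈ Finset.Icc 1 k, ahat i) ≤ (∑ i ∈ Finset.Icc 1 k, a i) ∧
      ((∑ i ∈ Finset.Icc 1 k, a i) ≤ (∑ i ∈ Finset.Icc 1 k, ahat i) →
        ∀ j ∈ Finset.Icc 1 k, a j = A j * ((∑ i ∈ Finset.Ioc j K, a i) + σ2 / C j)) := by
    intro k
    induction k with
    | zero =>
      intro _
      simp
    | succ n ih =>
      intro hn
      have ihn := ih (le_trans (Nat.le_succ n) hn)
      have hmemK : n + 1 ∈ Finset.Icc 1 K := Finset.mem_Icc.mpr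
        ⟨Nat.succ_le_succ (Nat.zero_le n), le_trans hn hK0K'⟩
      have hApos : 0 ≤ A (n + 1) := hA _ hmemK
      have h1A : (0:ℝ) < 1 + A (n + 1) := by linarith
      have h1 := hhat' n hn
      have h2 := hfeas n hn
      have hle : (∑ i ∈ Finset.Icc 1 (n + 1), ahat i) ≤ ∑ i ∈ Finset.Icc 1 (n + 1), a i := by
        nlinarith [ihn.1]
      refine ⟨hle, ?_⟩
      intro heq' j hj
      have heq : (∑ i ∈ Finset.Icc 1 (n + 1), a i) = ∑ i ∈ Finset.Icc 1 (n + 1), ahat i :=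
        le_antisymm heq' hle
      have hmul : A (n + 1) * (∑ i ∈ Finset.Icc 1 (n + 1), a i)
          = A (n + 1) * (∑ i ∈ Finset.Icc 1 (n + 1), ahat i) := by rw [heq]
      -- deduce S n = Sh n
      have hprev : (∑ i ∈ Finset.Icc 1 n, a i) ≤ ∑ i ∈ Finset.Icc 1 n, ahat i := by
        linarith [ihn.1]
      rcases Finset.mem_Icc.mp hj with ⟨hj1, hj2⟩
      rcases Nat.lt_or_ge j (n + 1) with hlt | hge
      · exact ihn.2 hprev j (Finset.mem_Icc.mpr ⟨hj1, Nat.lt_succ_iff.mp hlt⟩)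
      · have hjeq : j = n + 1 := le_antisymm hj2 hge
        subst hjeq
        rw [tail (n + 1) (le_trans hn hK0K')]
        have hSk : ∑ i ∈ Finset.Icc 1 (n+1), a i = (∑ i ∈ Finset.Icc 1 n, a i) + a (n+1) :=
          step a n
        have hprev' : (∑ i ∈ Finset.Icc 1 n, a i) = ∑ i ∈ Finset.Icc 1 n, ahat i :=
          le_antisymm hprev ihn.1
        -- from h1, heq, hprev': (1+A)(S (n+1)) = S n + Aθ + Aσ²/C
        have key : (1 + A (n + 1)) * (∑ i ∈ Finset.Icc 1 (n + 1), a i)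
            = (∑ i ∈ Finset.Icc 1 n, a i) + A (n + 1) * θ + A (n + 1) * (σ2 / C (n + 1)) := by
          rw [heq, hprev']; exact h1
        have : a (n+1) = A (n+1) * θ - A (n+1) * (∑ i ∈ Finset.Icc 1 (n+1), a i)
            + A (n+1) * (σ2 / C (n+1)) := by nlinarith [key, hSk]
        rw [this]; ring
  refine ⟨?_, ?_, ?_⟩
  · intro k hk
    exact (main k (Finset.mem_Icc.mp hk).2).1
  · rw [tail K0 hK0K']
    linarith [(main K0 le_rfl).1]
  · rw [tail K0 hK0K']
    constructor
    · intro h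
      have heq' : (∑ i ∈ Finset.Icc 1 K0, a i) ≤ ∑ i ∈ Finset.Icc 1 K0, ahat i := by linarith
      intro k hk
      exact (main K0 le_rfl).2 heq' k hk
    · intro hact
      -- show S K0 = Sh K0 by induction
      have eqall : ∀ k, k ≤ K0 → (∑ i ∈ Finset.Icc 1 k, a i) = ∑ i ∈ Finset.Icc 1 k, ahat i := by
        intro k
        induction k with
        | zero => intro _; simp
        | succ n ih =>
          intro hn
          have ihn := ih (le_trans (Nat.le_succ n) hn)
          have hmemK0 : n + 1 ∈ Finset.Icc 1 K0 := Finset.mem_Icc.mpr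
            ⟨Nat.succ_le_succ (Nat.zero_le n), hn⟩
          have hmemK : n + 1 ∈ Finset.Icc 1 K := Finset.mem_Icc.mpr
            ⟨Nat.succ_le_succ (Nat.zero_le n), le_trans hn hK0K'⟩
          have hApos : 0 ≤ A (n + 1) := hA _ hmemK
          have h1A : (0:ℝ) < 1 + A (n + 1) := by linarith
          have h1 := hhat' n hn
          have hActk := hact _ hmemK0
          rw [tail (n + 1) (le_trans hn hK0K')] at hActk
          have hSk := step a n
          have key : (1 + A (n + 1)) * (∑ i ∈ Finset.Icc 1 (n + 1), a i)
              = (1 + A (n + 1)) * (∑ i ∈ Finset.Icc 1 (n + 1), ahat i) := by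
            rw [h1, ← ihn]
            nlinarith [hActk, hSk]
          exact mul_left_cancel₀ (ne_of_gt h1A) key
      rw [eqall K0 le_rfl]
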